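/- The quotient of A*B by the two-sided ideal generated by the two commutators [p₁,q₁] and [p₂,q₁] has finite-dimensional irreducible representations of arbitrarily large dimension: for every natural number n there exists a simple left module over this quotient whose k-dimension is finite and greater than n. -/

import Mathlib

open scoped TensorProduct

/-- A two-element family of types, used to form binary free products. -/
def fam (A B : Type) : Bool → Type
  | true => A
  | false => B

instance famSemiring (A B : Type) [Semiring A] [Semiring B] : ∀ b, Semiring (fam A B b)
  | true => ‹Semiring A›
  | false => ‹Semiring B›

instance famAlgebra (k A B : Type) [CommSemiring k] [Semiring A] [Semiring B]
    [Algebra k A] [Algebra k B] : ∀ b, Algebra k (fam A B b)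
  | true => ‹Algebra k A›
  | false => ‹Algebra k B›

/-- The free product (coproduct in the category of unital associative `k`-algebras)
`A * B` of two `k`-algebras. -/
abbrev FP (k A B : Type) [CommSemiring k] [Semiring A] [Semiring B]
    [Algebra k A] [Algebra k B] : Type :=
  LinearAlgebra.FreeProduct k (fam A B)

/-- The canonical map `A →ₐ[k] A * B`. -/
noncomputable def inl (k A B : Type) [CommSemiring k] [Semiring A] [Semiring B]
    [Algebra k A] [Algebra k B] : A →ₐ[k] FP k A B :=
  LinearAlgebra.FreeProduct.ι k (fam A B) true

/-- The canonical map `B →ₐ[k] A * B`. -/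
noncomputable def inr (k A B : Type) [CommSemiring k] [Semiring A] [Semiring B]
    [Algebra k A] [Algebra k B] : B →ₐ[k] FP k A B :=
  LinearAlgebra.FreeProduct.ι k (fam A B) false

/-- The image in `A*B` of the `i`-th standard primitive idempotent of `A = k^⊕3`. -/
noncomputable def pgen (k : Type) [Field k] (i : Fin 3) : FP k (Fin 3 → k) (Fin 3 → k) :=
  inl k (Fin 3 → k) (Fin 3 → k) (Pi.single i 1)

/-- The image in `A*B` of the `i`-th standard primitive idempotent of `B = k^⊕3`. -/
noncomputable def qgen (k : Type) [Field k] (i : Fin 3) : FP k (Fin 3 → k) (Fin 3 → k) :=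
  inr k (Fin 3 → k) (Fin 3 → k) (Pi.single i 1)

/-- The quotient of `k^⊕3 * k^⊕3` by the two-sided ideal generated by `[p₁,q₁]` and `[p₂,q₁]`. -/
abbrev Q11 (k : Type) [Field k] : Type :=
  RingQuot (fun u v : FP k (Fin 3 → k) (Fin 3 → k) =>
    (u = pgen k 0 * qgen k 0 - qgen k 0 * pgen k 0 ∨
      u = pgen k 1 * qgen k 0 - qgen k 0 * pgen k 1) ∧ v = 0)

set_option maxHeartbeats 1600000
set_option synthInstance.maxHeartbeats 400000

namespace S11
open Polynomial Finset

set_option linter.unusedSectionVars false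
variable {k : Type} [Field k] [CharZero k]

noncomputable section

variable (k) in
/-- substitution `p ↦ p.comp (X + C c)` as a linear endomorphism of `k[X]` -/
def sh (c : k) : Polynomial k →ₗ[k] Polynomial k where
  toFun p := p.comp (X + C c)
  map_add' p q := Polynomial.add_comp
  map_smul' a p := by simp

variable (k) in
/-- signed coefficient reversal in degrees ≤ N -/
def rf (N : ℕ) : Polynomial k →ₗ[k] Polynomial k where
  toFun p := ∑ i ∈ Finset.range (N+1), C ((-1:k)^i * p.coeff i) * X^(N - i)
  map_add' p q := by
    simp [mul_add, C_add, add_mul, Finset.sum_add_distrib]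
  map_smul' a p := by
    simp only [coeff_smul, smul_eq_mul, RingHom.id_apply, Finset.smul_sum]
    refine Finset.sum_congr rfl fun i _ => ?_
    rw [Polynomial.smul_eq_C_mul, ← mul_assoc (C a), ← C_mul,
      show a * ((-1:k)^i * p.coeff i) = (-1:k)^i * (a * p.coeff i) from by ring]

variable {N : ℕ}

lemma sh_mem (c : k) {p : k[X]} (hp : p ∈ degreeLT k (N+1)) :
    sh k c p ∈ degreeLT k (N+1) := by
  rw [mem_degreeLT] at hp ⊢
  rcases eq_or_ne p 0 with rfl | h0
  · simpa [sh] using hp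
  · have h1 : (p.comp (X + C c)).degree ≤ (p.comp (X + C c)).natDegree :=
      degree_le_natDegree
    rw [natDegree_comp, natDegree_X_add_C, mul_one] at h1
    refine lt_of_le_of_lt (by simpa [sh] using h1) ?_
    rwa [degree_eq_natDegree h0] at hp

lemma rf_mem (p : k[X]) : rf k N p ∈ degreeLT k (N+1) := by
  rw [mem_degreeLT]
  unfold rf
  simp only [LinearMap.coe_mk, AddHom.coe_mk]
  refine lt_of_le_of_lt (degree_sum_le _ _) ?_
  rw [Finset.sup_lt_iff (by exact_mod_cast WithBot.bot_lt_coe _)]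
  intro i hi
  refine lt_of_le_of_lt (degree_C_mul_X_pow_le _ _) ?_
  exact_mod_cast Nat.lt_succ_of_le (Nat.sub_le N i)

lemma Xpow_mem {j : ℕ} (hj : j ≤ N) : (X:k[X])^j ∈ degreeLT k (N+1) := by
  rw [mem_degreeLT, degree_X_pow]
  exact_mod_cast Nat.lt_succ_of_le hj

lemma one_mem_deg : (1:k[X]) ∈ degreeLT k (N+1) := by
  rw [mem_degreeLT, degree_one]
  exact_mod_cast Nat.succ_pos N

lemma rf_Xpow {j : ℕ} (hj : j ≤ N) :
    rf k N ((X:k[X])^j) = C ((-1:k)^j) * X^(N-j) := by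
  unfold rf
  simp only [LinearMap.coe_mk, AddHom.coe_mk, coeff_X_pow]
  rw [Finset.sum_eq_single j]
  · simp
  · intro i _ hij
    simp [hij, Ne.symm hij]
  · intro h
    exact absurd (Finset.mem_range.2 (Nat.lt_succ_of_le hj)) h

lemma rf_C_mul (a : k) (p : k[X]) : rf k N (C a * p) = C a * rf k N p := by
  rw [← smul_eq_C_mul, ← smul_eq_C_mul, map_smul]

lemma rf_rf (hN : Even N) {j : ℕ} (hj : j ≤ N) :
    rf k N (rf k N ((X:k[X])^j)) = X^j := by
  rw [rf_Xpow hj, rf_C_mul, rf_Xpow (Nat.sub_le N j), ← mul_assoc, ← C_mul,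
    ← pow_add]
  have h1 : j + (N - j) = N := by omega
  have h2 : N - (N - j) = j := by omega
  rw [h1, h2, hN.neg_one_pow, map_one, one_mul]

lemma sh_one_Xpow {j : ℕ} : sh k 1 ((X:k[X])^j) = (X+1)^j := by
  simp [sh]

lemma claimA {j : ℕ} (hj : j ≤ N) :
    (∑ i ∈ range (N+1), C ((-1:k)^i * (j.choose i : k)) * (X+1)^(N-i))
      = X^j * (X+1)^(N-j) := by
  rw [← Finset.sum_subset (Finset.range_subset_range.2 (Nat.succ_le_succ hj))
      (fun i _ hi => by
        have hji : j < i := by simpa using hi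
        simp [Nat.choose_eq_zero_of_lt hji])]
  have h2 : ∀ i ∈ range (j+1),
      C ((-1:k)^i * (j.choose i : k)) * (X+1)^(N-i)
        = (C ((-1:k)^i * (j.choose i : k)) * (X+1)^(j-i)) * (X+1)^(N-j) := by
    intro i hi
    rw [mul_assoc, ← pow_add]
    congr 2
    have : i ≤ j := Nat.lt_succ_iff.1 (mem_range.1 hi)
    omega
  rw [Finset.sum_congr rfl h2, ← Finset.sum_mul]
  congr 1
  have hbin := add_pow (-1 : k[X]) (X+1) j
  have hx : (-1 + (X+1) : k[X]) = X := by ring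
  rw [hx] at hbin
  rw [hbin]
  refine Finset.sum_congr rfl fun i hi => ?_
  simp only [C_mul, map_pow, map_neg, map_one, C_eq_natCast]
  push_cast
  ring

lemma claimB {j : ℕ} (hj : j ≤ N) :
    (∑ i ∈ range (N+1), C (((N-j).choose i : k)) * X^(N-i)) = X^j * (X+1)^(N-j) := by
  rw [← Finset.sum_subset (Finset.range_subset_range.2 (Nat.succ_le_succ (Nat.sub_le N j)))
      (fun i _ hi => by
        have hji : N - j < i := by simpa using hi
        simp [Nat.choose_eq_zero_of_lt hji])]
  have h2 : ∀ i ∈ range (N-j+1),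
      C (((N-j).choose i : k)) * X^(N-i)
        = X^j * (C (((N-j).choose i : k)) * X^((N-j)-i)) := by
    intro i hi
    have hiN : i ≤ N - j := Nat.lt_succ_iff.1 (mem_range.1 hi)
    rw [mul_left_comm, ← pow_add]
    congr 2
    omega
  rw [Finset.sum_congr rfl h2, ← Finset.mul_sum]
  congr 1
  have hbin := add_pow (1 : k[X]) X (N-j)
  rw [show ((1:k[X]) + X) = X + 1 by ring] at hbin
  rw [hbin]
  refine Finset.sum_congr rfl fun i hi => ?_
  simp only [C_eq_natCast]
  push_cast
  ring

lemma key (hN : Even N) {j : ℕ} (hj : j ≤ N) :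
    sh k 1 (rf k N (sh k 1 ((X:k[X])^j)))
      = rf k N (sh k (-1) (rf k N ((X:k[X])^j))) := by
  have hL : sh k 1 (rf k N (sh k 1 ((X:k[X])^j)))
      = ∑ i ∈ range (N+1), C ((-1:k)^i * (j.choose i : k)) * (X+1)^(N-i) := by
    rw [sh_one_Xpow]
    have : rf k N ((X+1:k[X])^j)
        = ∑ i ∈ range (N+1), C ((-1:k)^i * (j.choose i : k)) * X^(N-i) := by
      unfold rf
      simp only [LinearMap.coe_mk, AddHom.coe_mk, coeff_X_add_one_pow]
    rw [this, map_sum]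
    refine Finset.sum_congr rfl fun i _ => ?_
    simp [sh]
  have hR : rf k N (sh k (-1) (rf k N ((X:k[X])^j)))
      = ∑ i ∈ range (N+1), C (((N-j).choose i : k)) * X^(N-i) := by
    rw [rf_Xpow hj]
    have h1 : sh k (-1) (C ((-1:k)^j) * X^(N-j))
        = C ((-1:k)^j) * (X + C (-1))^(N-j) := by
      simp [sh]
    rw [h1, rf_C_mul]
    have h2 : rf k N ((X + C (-1:k))^(N-j))
        = ∑ i ∈ range (N+1), C ((-1:k)^i * ((-1:k)^(N-j-i) * ((N-j).choose i : k))) * X^(N-i) := by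
      unfold rf
      simp only [LinearMap.coe_mk, AddHom.coe_mk, coeff_X_add_C_pow]
    rw [h2, Finset.mul_sum]
    refine Finset.sum_congr rfl fun i hi => ?_
    rcases le_or_gt i (N-j) with h | h
    · rw [← mul_assoc, ← C_mul]
      congr 2
      have e1 : (-1:k)^i * ((-1:k)^(N-j-i)) = (-1:k)^(N-j) := by
        rw [← pow_add]; congr 1; omega
      calc (-1:k)^j * ((-1:k)^i * ((-1:k)^(N-j-i) * ((N-j).choose i : k)))
          = ((-1:k)^j * (-1:k)^(N-j)) * ((N-j).choose i : k) := by
            rw [← e1]; ring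
        _ = ((N-j).choose i : k) := by
            rw [← pow_add, show j + (N-j) = N by omega, hN.neg_one_pow, one_mul]
    · rw [Nat.choose_eq_zero_of_lt h]
      simp
  rw [hL, hR, claimA hj, claimB hj]

variable (k N) in
abbrev MT := ↥(degreeLT k (N+1))

def tE : Module.End k (MT k N) := (sh k 1).restrict fun _ hp => sh_mem 1 hp
def tE' : Module.End k (MT k N) := (sh k (-1)).restrict fun _ hp => sh_mem (-1) hp
def uE : Module.End k (MT k N) := (rf k N).restrict fun p _ => rf_mem p

lemma degLT_eq_sum {p : k[X]} (hp : p ∈ degreeLT k (N+1)) :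
    p = ∑ i ∈ range (N+1), C (p.coeff i) * X^i := by
  ext n
  rw [finset_sum_coeff]
  simp only [coeff_C_mul, coeff_X_pow, mul_ite, mul_one, mul_zero]
  rcases lt_or_ge n (N+1) with h | h
  · rw [Finset.sum_eq_single n]
    · simp
    · intro i _ hin; simp [hin, Ne.symm hin]
    · intro hn; exact absurd (Finset.mem_range.2 h) hn
  · rw [Finset.sum_eq_zero, coeff_eq_zero_of_degree_lt]
    · exact lt_of_lt_of_le (mem_degreeLT.1 hp) (by exact_mod_cast h)
    · intro i hi
      have hni : ¬ n = i := by have := Finset.mem_range.1 hi; omega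
      simp [hni]

lemma apply_eq_of_basis {f g : k[X] →ₗ[k] k[X]}
    (h : ∀ j, j ≤ N → f ((X:k[X])^j) = g ((X:k[X])^j)) {p : k[X]}
    (hp : p ∈ degreeLT k (N+1)) : f p = g p := by
  conv_lhs => rw [degLT_eq_sum hp]
  conv_rhs => rw [degLT_eq_sum hp]
  rw [map_sum, map_sum]
  refine Finset.sum_congr rfl fun i hi => ?_
  rw [← smul_eq_C_mul, map_smul, map_smul, h i (Nat.lt_succ_iff.1 (mem_range.1 hi))]

lemma tE_mul_tE' : (tE * tE' : Module.End k (MT k N)) = 1 := by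
  apply LinearMap.ext; rintro ⟨p, hp⟩
  apply Subtype.ext
  show sh k 1 (sh k (-1) p) = p
  show (p.comp (X + C (-1))).comp (X + C 1) = p
  rw [Polynomial.comp_assoc]
  have : ((X + C (-1:k)).comp (X + C 1)) = X := by
    simp [add_comp]
  rw [this, comp_X]

lemma tE'_mul_tE : (tE' * tE : Module.End k (MT k N)) = 1 := by
  apply LinearMap.ext; rintro ⟨p, hp⟩
  apply Subtype.ext
  show sh k (-1) (sh k 1 p) = p
  show (p.comp (X + C 1)).comp (X + C (-1)) = p
  rw [Polynomial.comp_assoc]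
  have : ((X + C (1:k)).comp (X + C (-1))) = X := by
    simp [add_comp]
  rw [this, comp_X]

lemma uE_mul_uE (hN : Even N) : (uE * uE : Module.End k (MT k N)) = 1 := by
  apply LinearMap.ext; rintro ⟨p, hp⟩
  apply Subtype.ext
  show rf k N (rf k N p) = p
  have := apply_eq_of_basis (f := (rf k N).comp (rf k N)) (g := LinearMap.id)
    (fun j hj => by simpa using rf_rf hN hj) hp
  simpa using this

lemma keyEnd (hN : Even N) :
    (tE * uE * tE : Module.End k (MT k N)) = uE * tE' * uE := by
  apply LinearMap.ext; rintro ⟨p, hp⟩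
  apply Subtype.ext
  show sh k 1 (rf k N (sh k 1 p)) = rf k N (sh k (-1) (rf k N p))
  have := apply_eq_of_basis
    (f := (sh k 1).comp ((rf k N).comp (sh k 1)))
    (g := (rf k N).comp ((sh k (-1)).comp (rf k N)))
    (fun j hj => by simpa using key hN hj) hp
  simpa using this

lemma gE_cube (hN : Even N) : ((uE * tE : Module.End k (MT k N)))^3 = 1 := by
  have huu := uE_mul_uE (k := k) hN
  have htt := tE'_mul_tE (k := k) (N := N)
  have h3 := keyEnd (k := k) hN
  have h3' : ∀ x : Module.End k (MT k N),
      tE * (uE * (tE * x)) = uE * (tE' * (uE * x)) := by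
    intro x
    rw [← mul_assoc, ← mul_assoc, h3, mul_assoc, mul_assoc]
  simp only [pow_succ, pow_zero, one_mul, mul_assoc]
  rw [h3' (uE * tE), ← mul_assoc uE uE, huu, one_mul, ← mul_assoc uE uE, huu,
    one_mul]
  exact htt

section Proj
variable {S : Type} [Ring S] [Algebra k S]

/-- spectral-projection candidate for a cube root `g` and scalar `α` -/
def proj (g : S) (α : k) : S := (3:k)⁻¹ • (1 + α^2 • g + α • g^2)

lemma proj_mul {g : S} (hg : g^3 = 1) {α β : k} (hα : α^3 = 1) (hβ : β^3 = 1) :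
    proj g α * proj g β = ((3:k)⁻¹ * (1 + α^2*β + α*β^2)) • proj g β := by
  have hg4 : g^2 * g^2 = g := by
    rw [← pow_add, show 2+2 = 3+1 from rfl, pow_succ, hg, one_mul]
  have hg21 : g^2 * g = 1 := by rw [← pow_succ, hg]
  have hg12 : g * g^2 = 1 := by rw [← pow_succ', hg]
  have hgg : g * g = g^2 := (pow_two g).symm
  have hb4 : β^4 = β := by linear_combination β * hβ
  unfold proj
  simp only [smul_mul_assoc, mul_smul_comm, mul_add, add_mul, one_mul, mul_one,
    smul_smul, smul_add, hgg, hg4, hg21, hg12]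
  match_scalars
  all_goals (
    first
      | ring1
      | (ring_nf
         simp only [hα, hβ, hb4]
         ring1))

lemma proj_sum {g : S} {ω : k} (hω : ω^2 + ω + 1 = 0) :
    proj g (1:k) + proj g ω + proj g (ω^2) = 1 := by
  have hω3 : ω^3 = 1 := by linear_combination (ω - 1) * hω
  have hω4 : ω^4 = ω := by linear_combination (ω^2 - ω) * hω
  have hω5 : ω^5 = ω^2 := by linear_combination (ω^3 - ω^2) * hω
  have hω6 : ω^6 = 1 := by linear_combination (ω^4 - ω^3 + ω - 1) * hω
  unfold proj
  match_scalars
  all_goals (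
    first
      | ring1
      | (ring_nf
         try simp only [hω3, hω4, hω5, hω6]
         first
           | ring1
           | linear_combination (3:k)⁻¹ * hω
           | linear_combination hω
           | linear_combination (3:k)⁻¹ * (3:k)⁻¹ * hω))

lemma proj_gsum {g : S} {ω : k} (hω : ω^2 + ω + 1 = 0) :
    proj g (1:k) + ω • proj g ω + ω^2 • proj g (ω^2) = g := by
  have hω3 : ω^3 = 1 := by linear_combination (ω - 1) * hω
  have hω4 : ω^4 = ω := by linear_combination (ω^2 - ω) * hω
  have hω5 : ω^5 = ω^2 := by linear_combination (ω^3 - ω^2) * hω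
  have hω6 : ω^6 = 1 := by linear_combination (ω^4 - ω^3 + ω - 1) * hω
  unfold proj
  match_scalars
  all_goals (
    first
      | ring1
      | (ring_nf
         try simp only [hω3, hω4, hω5, hω6]
         first
           | ring1
           | linear_combination (3:k)⁻¹ * hω
           | linear_combination hω
           | linear_combination (3:k)⁻¹ * (3:k)⁻¹ * hω))

/-- algebra hom from `k³` determined by three orthogonal idempotents summing to 1 -/
def tripleAlgHom (A0 A1 A2 : S)
    (h00 : A0*A0 = A0) (h11 : A1*A1 = A1) (h22 : A2*A2 = A2)
    (h01 : A0*A1 = 0) (h10 : A1*A0 = 0) (h02 : A0*A2 = 0) (h20 : A2*A0 = 0)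
    (h12 : A1*A2 = 0) (h21 : A2*A1 = 0) (hsum : A0 + A1 + A2 = 1) :
    (Fin 3 → k) →ₐ[k] S :=
  AlgHom.ofLinearMap
    { toFun := fun f => f 0 • A0 + f 1 • A1 + f 2 • A2
      map_add' := fun f h => by
        simp only [Pi.add_apply, add_smul]; abel
      map_smul' := fun c f => by
        simp only [Pi.smul_apply, smul_eq_mul, RingHom.id_apply, smul_add, smul_smul] }
    (by simp only [LinearMap.coe_mk, AddHom.coe_mk, Pi.one_apply, one_smul]; exact hsum)
    (by
      intro f h
      simp only [LinearMap.coe_mk, AddHom.coe_mk, Pi.mul_apply]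
      simp only [mul_add, add_mul, smul_mul_assoc, mul_smul_comm, smul_smul,
        h00, h11, h22, h01, h10, h02, h20, h12, h21, smul_zero, add_zero, zero_add]
      match_scalars <;> ring)

@[simp] lemma tripleAlgHom_apply (A0 A1 A2 : S) (h00 h11 h22 h01 h10 h02 h20 h12 h21 hsum)
    (f : Fin 3 → k) :
    tripleAlgHom A0 A1 A2 h00 h11 h22 h01 h10 h02 h20 h12 h21 hsum f
      = f 0 • A0 + f 1 • A1 + f 2 • A2 := rfl

end Proj

section Assemble

variable (N : ℕ)

/-- the order-3 operator -/
def gEnd : Module.End k (MT k N) := uE * tE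

lemma gEnd_cube (hN : Even N) : (gEnd (k:=k) N)^3 = 1 := gE_cube hN

/-- the B-side idempotent -/
def EE : Module.End k (MT k N) := (2:k)⁻¹ • (1 - uE)

lemma EE_mul_EE (hN : Even N) : (EE (k:=k) N) * EE N = EE N := by
  have huu := uE_mul_uE (k:=k) (N:=N) hN
  have expand : ((1: Module.End k (MT k N)) - uE) * (1 - uE)
      = 1 - uE - uE + uE * uE := by
    rw [sub_mul (1 : Module.End k (MT k N)) uE (1 - uE), one_mul,
      mul_sub uE (1 : Module.End k (MT k N)) uE, mul_one]
    abel
  unfold EE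
  rw [smul_mul_assoc, mul_smul_comm, smul_smul, expand, huu]
  match_scalars <;> norm_num

lemma EE_mul_compl (hN : Even N) : (EE (k:=k) N) * (1 - EE N) = 0 := by
  rw [mul_sub (EE (k:=k) N) 1 (EE N), mul_one, EE_mul_EE N hN, sub_self]

lemma compl_mul_EE (hN : Even N) : (1 - EE (k:=k) N) * EE N = 0 := by
  rw [sub_mul 1 (EE (k:=k) N) (EE N), one_mul, EE_mul_EE N hN, sub_self]

lemma compl_mul_compl (hN : Even N) :
    (1 - EE (k:=k) N) * (1 - EE N) = 1 - EE N := by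
  rw [sub_mul 1 (EE (k:=k) N) (1 - EE N), one_mul,
    mul_sub (EE (k:=k) N) 1 (EE N), mul_one, EE_mul_EE N hN, sub_self]
  exact sub_zero (1 - EE (k:=k) N)

lemma uE_from_EE : (1 : Module.End k (MT k N)) - (2:k) • EE N = uE := by
  unfold EE
  rw [smul_smul, show (2:k)*(2:k)⁻¹ = 1 by norm_num, one_smul]
  exact sub_sub_cancel 1 uE

variable (ω : k) (hω : ω^2 + ω + 1 = 0) (hN : Even N)

/-- the `A = k³` side algebra map -/
def phiA : (Fin 3 → k) →ₐ[k] Module.End k (MT k N) :=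
  tripleAlgHom (proj (gEnd N) (1:k)) (proj (gEnd N) ω) (proj (gEnd N) (ω^2))
    (by rw [proj_mul (gEnd_cube N hN) (one_pow 3) (one_pow 3),
          show (3:k)⁻¹ * (1 + (1:k)^2*1 + 1*1^2) = 1 by norm_num, one_smul])
    (by have hω3 : ω^3 = 1 := by linear_combination (ω - 1) * hω
        rw [proj_mul (gEnd_cube N hN) hω3 hω3,
          show (3:k)⁻¹ * (1 + ω^2*ω + ω*ω^2) = 1 by linear_combination (3:k)⁻¹*2*hω3,
          one_smul])
    (by have hω3 : ω^3 = 1 := by linear_combination (ω - 1) * hω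
        have hc : (ω^2)^3 = 1 := by rw [← pow_mul, mul_comm, pow_mul, hω3, one_pow]
        rw [proj_mul (gEnd_cube N hN) hc hc,
          show (3:k)⁻¹ * (1 + (ω^2)^2*ω^2 + ω^2*(ω^2)^2) = 1 by
            linear_combination ((3:k)⁻¹*2*(ω^3+1))*hω3,
          one_smul])
    (by have hω3 : ω^3 = 1 := by linear_combination (ω - 1) * hω
        rw [proj_mul (gEnd_cube N hN) (one_pow 3) hω3,
          show (3:k)⁻¹ * (1 + (1:k)^2*ω + 1*ω^2) = 0 by linear_combination (3:k)⁻¹*hω,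
          zero_smul])
    (by have hω3 : ω^3 = 1 := by linear_combination (ω - 1) * hω
        rw [proj_mul (gEnd_cube N hN) hω3 (one_pow 3),
          show (3:k)⁻¹ * (1 + ω^2*1 + ω*1^2) = 0 by linear_combination (3:k)⁻¹*hω,
          zero_smul])
    (by have hω3 : ω^3 = 1 := by linear_combination (ω - 1) * hω
        have hc : (ω^2)^3 = 1 := by rw [← pow_mul, mul_comm, pow_mul, hω3, one_pow]
        rw [proj_mul (gEnd_cube N hN) (one_pow 3) hc,
          show (3:k)⁻¹ * (1 + (1:k)^2*ω^2 + 1*(ω^2)^2) = 0 by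
            linear_combination (3:k)⁻¹*hω + ((3:k)⁻¹*ω)*hω3,
          zero_smul])
    (by have hω3 : ω^3 = 1 := by linear_combination (ω - 1) * hω
        have hc : (ω^2)^3 = 1 := by rw [← pow_mul, mul_comm, pow_mul, hω3, one_pow]
        rw [proj_mul (gEnd_cube N hN) hc (one_pow 3),
          show (3:k)⁻¹ * (1 + (ω^2)^2*1 + ω^2*1^2) = 0 by
            linear_combination (3:k)⁻¹*hω + ((3:k)⁻¹*ω)*hω3,
          zero_smul])
    (by have hω3 : ω^3 = 1 := by linear_combination (ω - 1) * hω
        have hc : (ω^2)^3 = 1 := by rw [← pow_mul, mul_comm, pow_mul, hω3, one_pow]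
        rw [proj_mul (gEnd_cube N hN) hω3 hc,
          show (3:k)⁻¹ * (1 + ω^2*ω^2 + ω*(ω^2)^2) = 0 by
            linear_combination (3:k)⁻¹*hω + ((3:k)⁻¹*(ω+ω^2))*hω3,
          zero_smul])
    (by have hω3 : ω^3 = 1 := by linear_combination (ω - 1) * hω
        have hc : (ω^2)^3 = 1 := by rw [← pow_mul, mul_comm, pow_mul, hω3, one_pow]
        rw [proj_mul (gEnd_cube N hN) hc hω3,
          show (3:k)⁻¹ * (1 + (ω^2)^2*ω + ω^2*ω^2) = 0 by
            linear_combination (3:k)⁻¹*hω + ((3:k)⁻¹*(ω+ω^2))*hω3,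
          zero_smul])
    (proj_sum hω)

/-- the `B = k³` side algebra map; the crucial point: `q₀ ↦ 0`. -/
def phiB : (Fin 3 → k) →ₐ[k] Module.End k (MT k N) :=
  tripleAlgHom 0 (EE N) (1 - EE N)
    (by simp) (EE_mul_EE N hN) (compl_mul_compl N hN)
    (by simp) (by simp) (by simp) (by simp)
    (EE_mul_compl N hN) (compl_mul_EE N hN)
    (by abel)

/-- the pair of maps, as a `Bool`-indexed family -/
def famMaps : {i : Bool} → (fam (Fin 3 → k) (Fin 3 → k) i) →ₐ[k] Module.End k (MT k N) :=
  fun {i} => match i with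
  | true => phiA N ω hω hN
  | false => phiB N hN

/-- the induced map on the free product -/
def Phi : FP k (Fin 3 → k) (Fin 3 → k) →ₐ[k] Module.End k (MT k N) :=
  LinearAlgebra.FreeProduct.lift k (fam (Fin 3 → k) (Fin 3 → k)) (famMaps N ω hω hN)

lemma Phi_p (a : Fin 3) :
    Phi N ω hω hN (pgen k a) = phiA N ω hω hN (Pi.single a 1) := by
  have h := (LinearAlgebra.FreeProduct.lift k (fam (Fin 3 → k) (Fin 3 → k))
    (B := Module.End k (MT k N))).left_inv (famMaps N ω hω hN)
  have h2 := congrArg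
    (fun F : {i : Bool} → fam (Fin 3 → k) (Fin 3 → k) i →ₐ[k] Module.End k (MT k N) =>
      @F true) h
  exact DFunLike.congr_fun h2 (Pi.single a 1)

lemma Phi_q (a : Fin 3) :
    Phi N ω hω hN (qgen k a) = phiB N hN (Pi.single a 1) := by
  have h := (LinearAlgebra.FreeProduct.lift k (fam (Fin 3 → k) (Fin 3 → k))
    (B := Module.End k (MT k N))).left_inv (famMaps N ω hω hN)
  have h2 := congrArg
    (fun F : {i : Bool} → fam (Fin 3 → k) (Fin 3 → k) i →ₐ[k] Module.End k (MT k N) =>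
      @F false) h
  exact DFunLike.congr_fun h2 (Pi.single a 1)

lemma Phi_q0 : Phi N ω hω hN (qgen k 0) = 0 := by
  rw [Phi_q, phiB, tripleAlgHom_apply]
  simp [Pi.single_apply]

lemma Phi_rel : ∀ x y : FP k (Fin 3 → k) (Fin 3 → k),
    ((x = pgen k 0 * qgen k 0 - qgen k 0 * pgen k 0 ∨
      x = pgen k 1 * qgen k 0 - qgen k 0 * pgen k 1) ∧ y = 0) →
    Phi N ω hω hN x = Phi N ω hω hN y := by
  rintro x y ⟨hx | hx, rfl⟩ <;> subst hx <;>
    simp [map_sub, map_mul, Phi_q0, map_zero]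

/-- the induced map on the quotient -/
def Psi : Q11 k →ₐ[k] Module.End k (MT k N) :=
  RingQuot.liftAlgHom k ⟨Phi N ω hω hN, Phi_rel N ω hω hN⟩

end Assemble


section Recover

variable (N : ℕ) (ω : k) (hω : ω^2 + ω + 1 = 0) (hN : Even N)

lemma Psi_mk (x : FP k (Fin 3 → k) (Fin 3 → k)) :
    Psi N ω hω hN (RingQuot.mkAlgHom k _ x) = Phi N ω hω hN x :=
  RingQuot.liftAlgHom_mkAlgHom_apply _ _ _ _

lemma phiA_single0 : phiA N ω hω hN (Pi.single 0 1) = proj (gEnd N) (1:k) := by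
  rw [phiA, tripleAlgHom_apply]
  simp [Pi.single_apply]

lemma phiA_single1 : phiA N ω hω hN (Pi.single 1 1) = proj (gEnd N) ω := by
  rw [phiA, tripleAlgHom_apply]
  simp [Pi.single_apply]

lemma phiA_single2 : phiA N ω hω hN (Pi.single 2 1) = proj (gEnd N) (ω^2) := by
  rw [phiA, tripleAlgHom_apply]
  simp [Pi.single_apply]

lemma phiB_single1 : phiB N hN ((Pi.single 1 1 : Fin 3 → k)) = EE (k := k) N := by
  show (Pi.single 1 1 : Fin 3 → k) 0 • (0 : Module.End k (MT k N))
      + (Pi.single 1 1 : Fin 3 → k) 1 • EE N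
      + (Pi.single 1 1 : Fin 3 → k) 2 • (1 - EE N) = EE N
  simp [Pi.single_apply]

/-- the element of `Q11` mapping to the idempotent `EE` -/
def xq1 : Q11 k := (RingQuot.mkAlgHom k _ (qgen k 1) : Q11 k)

/-- the element of `Q11` mapping to the idempotent `1 - EE` -/
def xq2 : Q11 k := (RingQuot.mkAlgHom k _ (qgen k 2) : Q11 k)

/-- the element of `Q11` mapping to the order-3 operator `gEnd` -/
def xg : Q11 k :=
  (RingQuot.mkAlgHom k _ (pgen k 0 + ω • pgen k 1 + ω^2 • pgen k 2) : Q11 k)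

lemma phiB_single2 : phiB N hN ((Pi.single 2 1 : Fin 3 → k)) = 1 - EE (k := k) N := by
  show (Pi.single 2 1 : Fin 3 → k) 0 • (0 : Module.End k (MT k N))
      + (Pi.single 2 1 : Fin 3 → k) 1 • EE N
      + (Pi.single 2 1 : Fin 3 → k) 2 • (1 - EE N) = 1 - EE N
  simp [Pi.single_apply]

lemma Psi_xq1 : Psi N ω hω hN xq1 = EE (k := k) N := by
  unfold xq1
  rw [Psi_mk, Phi_q, phiB_single1]

lemma Psi_xq2 : Psi N ω hω hN xq2 = 1 - EE (k := k) N := by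
  unfold xq2
  rw [Psi_mk, Phi_q, phiB_single2]

lemma uE_apply_eq (m : MT k N) :
    uE m = (1 - EE (k := k) N) m - EE N m := by
  have h := uE_from_EE (k := k) N
  have h2 := congrArg (fun L : Module.End k (MT k N) => L m) h
  simp only [LinearMap.sub_apply, LinearMap.smul_apply, Module.End.one_apply] at h2 ⊢
  rw [← h2, two_smul]
  abel

lemma Psi_xg : Psi N ω hω hN (xg ω) = gEnd N := by
  unfold xg
  rw [Psi_mk, map_add, map_add, map_smul, map_smul, Phi_p, Phi_p, Phi_p,
    phiA_single0, phiA_single1, phiA_single2]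
  exact proj_gsum hω

lemma uE_mul_gEnd (hNe : Even N) : (uE : Module.End k (MT k N)) * gEnd N = tE := by
  unfold gEnd
  rw [← mul_assoc, uE_mul_uE hNe, one_mul]

lemma gg_mul_uE (hNe : Even N) : gEnd N * gEnd N * (uE : Module.End k (MT k N)) = tE' := by
  have h3 := keyEnd (k := k) (N := N) hNe
  have huu := uE_mul_uE (k := k) (N := N) hNe
  have h3' : ∀ x : Module.End k (MT k N),
      tE * (uE * (tE * x)) = uE * (tE' * (uE * x)) := by
    intro x
    rw [← mul_assoc, ← mul_assoc, h3, mul_assoc, mul_assoc]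
  unfold gEnd
  simp only [mul_assoc]
  rw [h3' uE, ← mul_assoc uE uE, huu, one_mul, mul_one]

end Recover

section Simplicity

variable {N : ℕ}

lemma shift_fixed {p : k[X]} (h : p.comp (X + C 1) = p) : ∃ c, p = C c := by
  have heval : ∀ x : k, p.eval (x + 1) = p.eval x := by
    intro x
    conv_rhs => rw [← h]
    rw [eval_comp, eval_add, eval_X, eval_C]
  have hnat : ∀ n : ℕ, p.eval ((n:k)) = p.eval 0 := by
    intro n
    induction n with
    | zero => norm_num
    | succ n ih => rw [Nat.cast_succ, heval, ih]
  have hq : (p - C (p.eval 0)) = 0 := by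
    apply eq_zero_of_infinite_isRoot
    apply Set.infinite_of_injective_forall_mem (f := fun n : ℕ => (n:k))
      (hi := Nat.cast_injective)
    intro n
    show (p - C (p.eval 0)).IsRoot ((n:k))
    simp [IsRoot, hnat n]
  exact ⟨p.eval 0, by rwa [sub_eq_zero] at hq⟩

/-- the constant polynomial `1` as an element of the module -/
def oneM : MT k N := ⟨1, one_mem_deg⟩

lemma oneM_ne_zero : (oneM : MT k N) ≠ 0 := by
  intro h
  exact one_ne_zero (congrArg (fun m : MT k N => (m : k[X])) h)

lemma one_mem_of_closed (W0 : Submodule k (MT k N))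
    (hcl : ∀ m ∈ W0, tE m ∈ W0) (hne : ∃ m ∈ W0, m ≠ 0) :
    (oneM : MT k N) ∈ W0 := by
  classical
  obtain ⟨m0, hm0W, hm0⟩ := hne
  set D := {d : ℕ | ∃ m : MT k N, m ∈ W0 ∧ m ≠ 0 ∧ ((m : k[X])).natDegree = d} with hD
  have hDne : D.Nonempty := ⟨_, m0, hm0W, hm0, rfl⟩
  obtain ⟨m, hmW, hm, hdeg⟩ := Nat.sInf_mem hDne
  rcases Nat.eq_zero_or_pos (sInf D) with h0 | hpos
  · rw [h0] at hdeg
    obtain ⟨c, hc⟩ := natDegree_eq_zero.1 hdeg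
    have hc0 : c ≠ 0 := by
      intro h
      apply hm
      apply Subtype.ext
      rw [← hc, h, map_zero]
      rfl
    have h1 : (oneM : MT k N) = c⁻¹ • m := by
      apply Subtype.ext
      show (1 : k[X]) = c⁻¹ • (m : k[X])
      rw [← hc, Polynomial.smul_C, smul_eq_mul, inv_mul_cancel₀ hc0, map_one]
    rw [h1]
    exact W0.smul_mem _ hmW
  · exfalso
    set p := (m : k[X]) with hp
    have hp0 : p ≠ 0 := fun h => hm (Subtype.ext h)
    have hfix : p.comp (X + C 1) ≠ p := by
      intro h
      obtain ⟨c, hc⟩ := shift_fixed h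
      rw [hc, natDegree_C] at hdeg
      omega
    have hmem' : tE m - m ∈ W0 := W0.sub_mem (hcl m hmW) hmW
    have hval : ((tE m - m : MT k N) : k[X]) = p.comp (X + C 1) - p := rfl
    have hne0 : tE m - m ≠ 0 := by
      intro h
      apply hfix
      have h2 : ((tE m - m : MT k N) : k[X]) = 0 := by rw [h]; rfl
      rw [hval] at h2
      exact sub_eq_zero.1 h2
    have hndc : (p.comp (X + C 1)).natDegree = p.natDegree := by
      rw [natDegree_comp, natDegree_X_add_C, mul_one]
    have hlc : (p.comp (X + C 1)).leadingCoeff = p.leadingCoeff := by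
      rw [leadingCoeff_comp (by rw [natDegree_X_add_C]; exact one_ne_zero)]
      rw [(monic_X_add_C (1:k)).leadingCoeff, one_pow, mul_one]
    have hcomp0 : p.comp (X + C 1) ≠ 0 := by
      intro h
      apply hp0
      rw [← leadingCoeff_eq_zero, ← hlc, h, leadingCoeff_zero]
    have hdd : (p.comp (X + C 1)).degree = p.degree := by
      rw [degree_eq_natDegree hcomp0, degree_eq_natDegree hp0, hndc]
    have hlt : (p.comp (X + C 1) - p).degree < p.degree := by
      have := degree_sub_lt hdd hcomp0 hlc
      rwa [hdd] at this
    have hlt2 : (p.comp (X + C 1) - p).natDegree < p.natDegree := by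
      apply natDegree_lt_natDegree
      · intro h
        apply hne0
        apply Subtype.ext
        rw [hval, h]
        rfl
      · exact hlt

    have hmemD : (p.comp (X + C 1) - p).natDegree ∈ D := by
      refine ⟨tE m - m, hmem', hne0, ?_⟩
      rw [hval]
    have := Nat.sInf_le hmemD
    omega

lemma pv_mem (s : ℕ) : ((X + C ((s:ℕ):k))^N) ∈ degreeLT k (N+1) := by
  rw [mem_degreeLT]
  have hnd : ((X + C ((s:ℕ):k))^N).natDegree = N := by
    rw [natDegree_pow, natDegree_X_add_C, mul_one]
  have h1 : ((X + C ((s:ℕ):k))^N).degree ≤ (N : WithBot ℕ) := by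
    conv_rhs => rw [← hnd]
    exact degree_le_natDegree
  refine lt_of_le_of_lt h1 ?_
  exact_mod_cast Nat.lt_succ_self N

lemma uE_oneM : uE (oneM : MT k N) = ⟨(X + C ((0:ℕ):k))^N, pv_mem 0⟩ := by
  apply Subtype.ext
  show rf k N 1 = _
  unfold rf
  simp only [LinearMap.coe_mk, AddHom.coe_mk, coeff_one]
  rw [Finset.sum_eq_single 0]
  · simp
  · intro i _ hi
    simp [hi]
  · intro h
    exact absurd (Finset.mem_range.2 (Nat.succ_pos N)) h

lemma tE_pv (s : ℕ) :
    tE (⟨(X + C ((s:ℕ):k))^N, pv_mem s⟩ : MT k N)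
      = ⟨(X + C ((s+1:ℕ):k))^N, pv_mem (s+1)⟩ := by
  apply Subtype.ext
  show ((X + C ((s:ℕ):k))^N).comp (X + C 1) = (X + C ((s+1:ℕ):k))^N
  rw [pow_comp, add_comp, X_comp, C_comp, Nat.cast_add, Nat.cast_one, C_add, C_1]
  ring

lemma rf_pv_coeff (hN : Even N) (s : ℕ) {j : ℕ} (hj : j ≤ N) :
    (rf k N ((X + C ((s:ℕ):k))^N)).coeff j
      = (-1:k)^j * (N.choose j) * ((s:ℕ):k)^j := by
  unfold rf
  simp only [LinearMap.coe_mk, AddHom.coe_mk, coeff_X_add_C_pow]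
  rw [finset_sum_coeff]
  simp only [coeff_C_mul, coeff_X_pow, mul_ite, mul_one, mul_zero]
  rw [Finset.sum_eq_single (N - j)]
  · rw [if_pos (by omega)]
    have hNNj : N - (N - j) = j := by omega
    rw [hNNj, Nat.choose_symm hj]
    have h1 : (-1:k)^(N-j) * (-1:k)^j = 1 := by
      rw [← pow_add, Nat.sub_add_cancel hj]
      exact hN.neg_one_pow
    have hsq : ((-1:k)^j) * ((-1:k)^j) = 1 := by
      rw [← pow_add]
      exact Even.neg_one_pow ⟨j, by ring⟩
    have hkey : (-1:k)^(N-j) = (-1:k)^j :=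
      mul_right_cancel₀ (pow_ne_zero _ (by norm_num)) (h1.trans hsq.symm)
    rw [hkey]
    ring
  · intro i hi hne
    have hiN : i ≤ N := Nat.lt_succ_iff.1 (Finset.mem_range.1 hi)
    rw [if_neg (by omega)]
  · intro h
    exact absurd (Finset.mem_range.2 (by omega)) h

/-- the coefficient matrix of the family `uE ⟨(X+s)^N⟩` -/
def Amat : Matrix (Fin (N+1)) (Fin (N+1)) k :=
  fun s j => (-1:k)^(j:ℕ) * (N.choose (j:ℕ)) * (((s:ℕ):k))^(j:ℕ)

lemma Amat_det_ne_zero : (Amat (k := k) (N := N)).det ≠ 0 := by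
  have hfact : (Amat (k := k) (N := N))
      = (Matrix.vandermonde (fun s : Fin (N+1) => -((s:ℕ):k)))
        * Matrix.diagonal (fun j : Fin (N+1) => ((N.choose (j:ℕ) : k))) := by
    ext s j
    rw [Matrix.mul_diagonal, Matrix.vandermonde_apply, neg_pow]
    unfold Amat
    ring
  rw [hfact, Matrix.det_mul, Matrix.det_diagonal, Matrix.det_vandermonde]
  apply mul_ne_zero
  · rw [Finset.prod_ne_zero_iff]
    intro i _
    rw [Finset.prod_ne_zero_iff]
    intro j hj
    have hij : i < j := Finset.mem_Ioi.1 hj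
    intro hzero
    have h1 : -(((j:ℕ)):k) = -(((i:ℕ)):k) := sub_eq_zero.1 hzero
    have h2 : ((j:ℕ):k) = ((i:ℕ):k) := neg_injective h1
    have h3 : (j:ℕ) = (i:ℕ) := Nat.cast_injective h2
    have h4 : (i:ℕ) < (j:ℕ) := hij
    omega
  · rw [Finset.prod_ne_zero_iff]
    intro j _
    exact Nat.cast_ne_zero.2 (Nat.choose_pos (Nat.lt_succ_iff.1 j.isLt)).ne'

lemma mm_span (hN : Even N) (W0 : Submodule k (MT k N))
    (htc : ∀ m ∈ W0, tE m ∈ W0) (huc : ∀ m ∈ W0, uE m ∈ W0)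
    (h1 : (oneM : MT k N) ∈ W0) : W0 = ⊤ := by
  classical
  have hv : ∀ s : ℕ, (⟨(X + C ((s:ℕ):k))^N, pv_mem s⟩ : MT k N) ∈ W0 := by
    intro s
    induction s with
    | zero =>
      have h := huc _ h1
      rwa [uE_oneM] at h
    | succ s ih =>
      have h := htc _ ih
      rwa [tE_pv] at h
  set wvm : Fin (N+1) → MT k N := fun s => uE ⟨(X + C (((s:ℕ)):k))^N, pv_mem _⟩ with hwvm
  have hw : ∀ s, wvm s ∈ W0 := fun s => huc _ (hv s)
  have hcoords : ∀ (s j : Fin (N+1)),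
      (degreeLTEquiv k (N+1) (wvm s)) j = Amat (k := k) (N := N) s j := by
    intro s j
    show ((wvm s : MT k N) : k[X]).coeff j = _
    have hw' : ((wvm s : MT k N) : k[X]) = rf k N ((X + C (((s:ℕ)):k))^N) := by
      simp only [hwvm, uE, LinearMap.restrict_apply]
    rw [hw']
    rw [rf_pv_coeff hN _ (Nat.lt_succ_iff.1 j.isLt)]
    rfl
  rw [eq_top_iff]
  rintro mm -
  set e := degreeLTEquiv k (N+1) with he
  set y : Fin (N+1) → k := e mm with hy
  have hdet := Amat_det_ne_zero (k := k) (N := N)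
  set c : Fin (N+1) → k := Matrix.vecMul y (Amat (k := k) (N := N))⁻¹ with hc
  have hrec : mm = ∑ s : Fin (N+1), c s • wvm s := by
    apply e.injective
    rw [map_sum]
    have hterm : ∀ s : Fin (N+1), e (c s • wvm s)
        = c s • (fun j => Amat (k:=k) (N:=N) s j) := by
      intro s
      rw [map_smul]
      congr 1
      funext j
      exact hcoords s j
    rw [Finset.sum_congr rfl (fun s _ => hterm s)]
    have hA : Matrix.vecMul c (Amat (k:=k) (N:=N)) = y := by
      rw [hc, Matrix.vecMul_vecMul, Matrix.nonsing_inv_mul _ (isUnit_iff_ne_zero.2 hdet),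
        Matrix.vecMul_one]
    funext j
    rw [Finset.sum_apply]
    simp only [Pi.smul_apply, smul_eq_mul]
    have hAj := congrFun hA j
    exact hAj.symm.trans (by simp [Matrix.vecMul, dotProduct])
  rw [hrec]
  exact Submodule.sum_mem _ (fun s _ => W0.smul_mem _ (hw s))

end Simplicity


end
end S11

open Polynomial in
theorem statement11 (k : Type) [Field k] [IsAlgClosed k] [CharZero k] :
    ∀ n : ℕ, ∃ (M : Type) (_ : AddCommGroup M) (_ : Module (Q11 k) M) (_ : Module k M)
      (_ : IsScalarTower k (Q11 k) M),
      IsSimpleModule (Q11 k) M ∧ Module.Finite k M ∧ n < Module.finrank k M := by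
  intro n
  classical
  obtain ⟨ω, hωroot⟩ := IsAlgClosed.exists_root (k := k) (p := X^2 + X + 1)
    (by
      have hdeg2 : (X^2 + X + 1 : Polynomial k).degree = 2 := by compute_degree!
      rw [hdeg2]
      norm_num)
  have hω : ω^2 + ω + 1 = 0 := by
    have := hωroot
    simp only [Polynomial.IsRoot, Polynomial.eval_add, Polynomial.eval_pow,
      Polynomial.eval_X, Polynomial.eval_one] at this
    exact this
  set N := 2*n + 2 with hNdef
  have hN : Even N := ⟨n+1, by omega⟩
  letI instQ : Module (Q11 k) (S11.MT k N) :=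
    Module.compHom _ (S11.Psi N ω hω hN).toRingHom
  have hsmul : ∀ (x : Q11 k) (m : S11.MT k N), x • m = S11.Psi N ω hω hN x m :=
    fun _ _ => rfl
  letI instT : IsScalarTower k (Q11 k) (S11.MT k N) := ⟨fun c x m => by
    rw [hsmul, map_smul, LinearMap.smul_apply, ← hsmul]⟩
  haveI hnt : Nontrivial (S11.MT k N) := ⟨⟨S11.oneM, 0, S11.oneM_ne_zero⟩⟩
  haveI hnts : Nontrivial (Submodule (Q11 k) (S11.MT k N)) := by
    refine ⟨⊥, ⊤, fun hbt => ?_⟩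
    have h1 : (S11.oneM : S11.MT k N) ∈ (⊤ : Submodule (Q11 k) (S11.MT k N)) :=
      Submodule.mem_top
    rw [← hbt, Submodule.mem_bot] at h1
    exact S11.oneM_ne_zero h1
  have hsimple : IsSimpleModule (Q11 k) (S11.MT k N) := by
    refine { eq_bot_or_eq_top := ?_ }
    intro W
    rcases eq_or_ne W ⊥ with h | h
    · exact Or.inl h
    · right
      obtain ⟨m0, hm0, hne⟩ := (Submodule.ne_bot_iff W).1 h
      set W0 : Submodule k (S11.MT k N) := Submodule.restrictScalars k W with hW0
      have hmem : ∀ m : S11.MT k N, m ∈ W0 ↔ m ∈ W := fun m => Iff.rfl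
      have hact : ∀ (x : Q11 k), ∀ m ∈ W0, (S11.Psi N ω hω hN x) m ∈ W0 := by
        intro x m hm
        have h2 : x • m ∈ W := W.smul_mem x ((hmem m).1 hm)
        rw [hsmul] at h2
        exact (hmem _).2 h2
      have hg : ∀ m ∈ W0, S11.gEnd N m ∈ W0 := by
        intro m hm
        have h2 := hact (S11.xg ω) m hm
        rwa [S11.Psi_xg] at h2
      have hE : ∀ m ∈ W0, S11.EE N m ∈ W0 := by
        intro m hm
        have h2 := hact S11.xq1 m hm
        rwa [S11.Psi_xq1] at h2
      have hE2 : ∀ m ∈ W0, (1 - S11.EE N) m ∈ W0 := by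
        intro m hm
        have h2 := hact S11.xq2 m hm
        rwa [S11.Psi_xq2] at h2
      have hu : ∀ m ∈ W0, S11.uE m ∈ W0 := by
        intro m hm
        rw [S11.uE_apply_eq]
        exact W0.sub_mem (hE2 m hm) (hE m hm)
      have ht : ∀ m ∈ W0, S11.tE m ∈ W0 := by
        intro m hm
        have h2 := hu _ (hg m hm)
        have h3 : S11.tE m = S11.uE (S11.gEnd N m) := by
          have h4 := S11.uE_mul_gEnd (k:=k) (N:=N) hN
          rw [← h4]
          rfl
        rw [h3]
        exact h2
      have h1W : (S11.oneM : S11.MT k N) ∈ W0 :=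
        S11.one_mem_of_closed W0 ht ⟨m0, (hmem m0).2 hm0, hne⟩
      have htop := S11.mm_span hN W0 ht hu h1W
      rw [eq_top_iff]
      intro m _
      have : m ∈ W0 := by rw [htop]; exact Submodule.mem_top
      exact (hmem m).1 this
  haveI hfin : Module.Finite k (S11.MT k N) :=
    Module.Finite.equiv (Polynomial.degreeLTEquiv k (N+1)).symm
  have hrank : Module.finrank k (S11.MT k N) = N + 1 := by
    rw [(Polynomial.degreeLTEquiv k (N+1)).finrank_eq, Module.finrank_fin_fun]
  exact ⟨S11.MT k N, inferInstance, instQ, inferInstance, instT, hsimple, hfin,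
    by rw [hrank]; omega⟩
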